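/- arXiv:1405.1855 — 6 statements merged into one kernel-verified Lean document; each statement's English description precedes it below -/
import Mathlib

section
/- Let α ∈ (0,1) and let S be a positive α-stable random variable, i.e. a nonnegative random variable with E[e^{-λS}] = e^{-λ^α} for all λ ≥ 0. Then for every natural number k ≥ 1, the negative moment E[S^{-αk}] is finite and equals k! / Γ(1 + αk). -/
open MeasureTheory Real
open Filter Set

/-- Negative moments of a positive `α`-stable random variable:
if `S ≥ 0` and `E[exp (-λ S)] = exp (-λ^α)` for all `λ ≥ 0`, with `α ∈ (0,1)`,
then for every `k ≥ 1` the negative moment `E[S^(-αk)]` is finite and equals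
`k! / Γ(1 + αk)`. -/
theorem negative_moments_positive_stable
    {Ω : Type*} [MeasurableSpace Ω] (P : Measure Ω) [IsProbabilityMeasure P]
    (α : ℝ) (hα : α ∈ Set.Ioo (0 : ℝ) 1)
    (S : Ω → ℝ) (hSmeas : Measurable S) (hSnonneg : ∀ ω, 0 ≤ S ω)
    (hLaplace : ∀ l : ℝ, 0 ≤ l →
      ∫ ω, Real.exp (-(l * S ω)) ∂P = Real.exp (-(l ^ α)))
    (k : ℕ) (hk : 1 ≤ k) :
    Integrable (fun ω => S ω ^ (-(α * (k : ℝ)))) P ∧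
      ∫ ω, S ω ^ (-(α * (k : ℝ))) ∂P
        = (Nat.factorial k : ℝ) / Real.Gamma (1 + α * k) := by
  obtain ⟨hα0, hα1⟩ := hα
  have hk0 : (0 : ℝ) < (k : ℝ) := by exact_mod_cast hk
  set β : ℝ := α * k with hβdef
  have hβ : 0 < β := mul_pos hα0 hk0
  have hΓβ : 0 < Real.Gamma β := Real.Gamma_pos_of_pos hβ
  -- Laplace transform in lintegral form
  have key_exp : ∀ c : ℝ, 0 ≤ c →
      ∫⁻ ω, ENNReal.ofReal (Real.exp (-(c * S ω))) ∂P
        = ENNReal.ofReal (Real.exp (-(c ^ α))) := by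
    intro c hc
    have hi : Integrable (fun ω => Real.exp (-(c * S ω))) P := by
      refine (integrable_const (1 : ℝ)).mono' ?_ ?_
      · exact (((measurable_const.mul hSmeas).neg).exp).aestronglyMeasurable
      · filter_upwards with ω
        rw [Real.norm_eq_abs, abs_of_pos (Real.exp_pos _)]
        have : -(c * S ω) ≤ 0 := by
          have := mul_nonneg hc (hSnonneg ω); linarith
        simpa using Real.exp_le_exp.mpr this
    rw [← ofReal_integral_eq_lintegral_ofReal hi
      (Filter.Eventually.of_forall fun ω => (Real.exp_pos _).le), hLaplace c hc]
  -- Step A : S > 0 a.e.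
  have hpos : ∀ᵐ ω ∂P, 0 < S ω := by
    have hZ : P {ω | S ω = 0} = 0 := by
      have hA : ∀ n : ℕ, P {ω | S ω = 0} ≤ ENNReal.ofReal (Real.exp (-((n : ℝ) ^ α))) := by
        intro n
        have hms : MeasurableSet {ω | S ω = 0} := hSmeas (measurableSet_singleton 0)
        calc P {ω | S ω = 0} = ∫⁻ ω in {ω | S ω = 0}, 1 ∂P := (setLIntegral_one _).symm
          _ ≤ ∫⁻ ω in {ω | S ω = 0}, ENNReal.ofReal (Real.exp (-((n : ℝ) * S ω))) ∂P := by
              refine setLIntegral_mono' hms fun ω hω => ?_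
              simp only [mem_setOf_eq] at hω
              simp [hω]
          _ ≤ ∫⁻ ω, ENNReal.ofReal (Real.exp (-((n : ℝ) * S ω))) ∂P :=
              setLIntegral_le_lintegral _ _
          _ = ENNReal.ofReal (Real.exp (-((n : ℝ) ^ α))) := key_exp _ (Nat.cast_nonneg n)
      have hT : Tendsto (fun n : ℕ => ENNReal.ofReal (Real.exp (-((n : ℝ) ^ α)))) atTop (nhds 0) := by
        have h1 : Tendsto (fun n : ℕ => ((n : ℝ)) ^ α) atTop atTop :=
          (tendsto_rpow_atTop hα0).comp tendsto_natCast_atTop_atTop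
        have h2 : Tendsto (fun n : ℕ => Real.exp (-((n : ℝ) ^ α))) atTop (nhds 0) :=
          Real.tendsto_exp_neg_atTop_nhds_zero.comp h1
        simpa [Function.comp_def] using (ENNReal.continuous_ofReal.tendsto 0).comp h2
      exact le_antisymm (ge_of_tendsto' hT hA) zero_le
    have : ∀ᵐ ω ∂P, S ω ≠ 0 := by
      rw [ae_iff]; simpa using hZ
    filter_upwards [this] with ω h
    exact lt_of_le_of_ne (hSnonneg ω) (Ne.symm h)
  -- Step B : pointwise Gamma representation
  have hBpt : ∀ s : ℝ, 0 < s →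
      ∫⁻ t in Ioi (0 : ℝ), ENNReal.ofReal (t ^ (β - 1) * Real.exp (-(t * s)))
        = ENNReal.ofReal (Real.Gamma β * s ^ (-β)) := by
    intro s hs
    have hi : IntegrableOn (fun t => t ^ (β - 1) * Real.exp (-(t * s))) (Ioi 0) := by
      have h := integrableOn_rpow_mul_exp_neg_mul_rpow (p := 1) (s := β - 1) (b := s)
        (by linarith) zero_lt_one hs
      refine h.congr_fun (fun t ht => ?_) measurableSet_Ioi
      beta_reduce
      rw [Real.rpow_one]; ring_nf
    rw [← ofReal_integral_eq_lintegral_ofReal hi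
      ((ae_restrict_iff' measurableSet_Ioi).mpr (Filter.Eventually.of_forall
        (fun t ht => by have h0 : (0:ℝ) < t := ht; positivity)))]
    congr 1
    have h := integral_rpow_mul_exp_neg_mul_Ioi hβ hs
    rw [show (fun t : ℝ => t ^ (β - 1) * Real.exp (-(t * s)))
        = fun t : ℝ => t ^ (β - 1) * Real.exp (-(s * t)) by funext t; rw [mul_comm t s]]
    rw [h, one_div, Real.inv_rpow hs.le, ← Real.rpow_neg hs.le, mul_comm]
  -- integrability of the outer integrand
  have hint : IntegrableOn (fun t : ℝ => t ^ (β - 1) * Real.exp (-(t ^ α))) (Ioi 0) := by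
    have base : IntegrableOn (fun y : ℝ => Real.exp (-y) * y ^ ((k : ℝ) - 1)) (Ioi 0) :=
      Real.GammaIntegral_convergent hk0
    have h := (integrableOn_Ioi_comp_rpow_iff' (fun y : ℝ => Real.exp (-y) * y ^ ((k : ℝ) - 1))
      (p := α) hα0.ne').mpr base
    refine h.congr_fun (fun x hx => ?_) measurableSet_Ioi
    have hx0 : (0 : ℝ) < x := hx
    beta_reduce
    rw [smul_eq_mul, ← Real.rpow_mul hx0.le, mul_comm (Real.exp _) _, ← mul_assoc,
      ← Real.rpow_add hx0, show α - 1 + α * ((k : ℝ) - 1) = β - 1 by rw [hβdef]; ring]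
  have hval : ∫ t in Ioi (0 : ℝ), t ^ (β - 1) * Real.exp (-(t ^ α))
      = (Nat.factorial (k - 1) : ℝ) / α := by
    have h := integral_rpow_mul_exp_neg_rpow (p := α) (q := β - 1) hα0 (by linarith)
    rw [show (β - 1 + 1) / α = (k : ℝ) by rw [hβdef]; field_simp; ring] at h
    have hkc : ((k : ℕ) : ℝ) = ((k - 1 : ℕ) : ℝ) + 1 := by
      rw [Nat.cast_sub hk]; ring
    rw [hkc, Real.Gamma_nat_eq_factorial] at h
    rw [h, one_div, inv_mul_eq_div]
  -- measurability on the product space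
  have hmeas2 : Measurable (Function.uncurry fun (ω : Ω) (t : ℝ) =>
      ENNReal.ofReal (t ^ (β - 1) * Real.exp (-(t * S ω)))) := by
    apply Measurable.ennreal_ofReal
    exact (measurable_snd.pow_const _).mul
      (((measurable_snd.mul (hSmeas.comp measurable_fst)).neg).exp)
  have nn : 0 ≤ᵐ[P] fun ω => S ω ^ (-β) :=
    Filter.Eventually.of_forall fun ω => Real.rpow_nonneg (hSnonneg ω) _
  have key : ENNReal.ofReal (Real.Gamma β) * ∫⁻ ω, ENNReal.ofReal (S ω ^ (-β)) ∂P
      = ENNReal.ofReal ((Nat.factorial (k - 1) : ℝ) / α) := by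
    calc ENNReal.ofReal (Real.Gamma β) * ∫⁻ ω, ENNReal.ofReal (S ω ^ (-β)) ∂P
        = ∫⁻ ω, ENNReal.ofReal (Real.Gamma β) * ENNReal.ofReal (S ω ^ (-β)) ∂P :=
          (lintegral_const_mul' _ _ ENNReal.ofReal_ne_top).symm
      _ = ∫⁻ ω, ∫⁻ t in Ioi (0 : ℝ),
            ENNReal.ofReal (t ^ (β - 1) * Real.exp (-(t * S ω))) ∂volume ∂P := by
          refine lintegral_congr_ae ?_
          filter_upwards [hpos] with ω hω
          rw [hBpt _ hω, ENNReal.ofReal_mul hΓβ.le]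
      _ = ∫⁻ t in Ioi (0 : ℝ), ∫⁻ ω,
            ENNReal.ofReal (t ^ (β - 1) * Real.exp (-(t * S ω))) ∂P ∂volume :=
          lintegral_lintegral_swap hmeas2.aemeasurable
      _ = ∫⁻ t in Ioi (0 : ℝ), ENNReal.ofReal (t ^ (β - 1) * Real.exp (-(t ^ α))) ∂volume := by
          refine setLIntegral_congr_fun measurableSet_Ioi
            (fun t ht => ?_)
          have ht0 : (0 : ℝ) < t := ht
          simp_rw [ENNReal.ofReal_mul (Real.rpow_pos_of_pos ht0 (β - 1)).le]
          rw [lintegral_const_mul' _ _ ENNReal.ofReal_ne_top, key_exp t ht0.le]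
      _ = ENNReal.ofReal ((Nat.factorial (k - 1) : ℝ) / α) := by
          rw [← ofReal_integral_eq_lintegral_ofReal hint
            ((ae_restrict_iff' measurableSet_Ioi).mpr (Filter.Eventually.of_forall
              (fun t ht => by have h0 : (0 : ℝ) < t := ht; positivity))), hval]
  have hE : ∫⁻ ω, ENNReal.ofReal (S ω ^ (-β)) ∂P
      = ENNReal.ofReal (((Nat.factorial (k - 1) : ℝ) / α) / Real.Gamma β) := by
    rw [ENNReal.ofReal_div_of_pos hΓβ,
      ENNReal.eq_div_iff (ne_of_gt (ENNReal.ofReal_pos.mpr hΓβ)) ENNReal.ofReal_ne_top]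
    exact key
  have hmF : Measurable fun ω => S ω ^ (-β) := hSmeas.pow_const _
  have hFin : Integrable (fun ω => S ω ^ (-β)) P := by
    refine ⟨hmF.aestronglyMeasurable, ?_⟩
    rw [hasFiniteIntegral_iff_ofReal nn, hE]
    exact ENNReal.ofReal_lt_top
  refine ⟨hFin, ?_⟩
  rw [integral_eq_lintegral_of_nonneg_ae nn hmF.aestronglyMeasurable, hE,
    ENNReal.toReal_ofReal (div_nonneg (div_nonneg (Nat.cast_nonneg _) hα0.le) hΓβ.le)]
  rw [show (1 : ℝ) + α * k = β + 1 by rw [hβdef]; ring, Real.Gamma_add_one hβ.ne']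
  have hfac : (Nat.factorial k : ℝ) = (k : ℝ) * (Nat.factorial (k - 1) : ℝ) := by
    exact_mod_cast (Nat.mul_factorial_pred (by omega)).symm
  rw [hfac, hβdef]
  field_simp
end

section
/- Let α ∈ (0,1) and let S be a positive α-stable random variable, i.e. a nonnegative random variable with E[e^{-λS}] = e^{-λ^α} for all λ ≥ 0, and assume S > 0 almost surely. Then the random variable M := S^{-α} (the Mittag--Leffler random variable) has Laplace transform E[e^{-λM}] = E_α(-λ) = ∑_{k=0}^∞ (-λ)^k / Γ(αk + 1) for every λ ≥ 0. -/
open MeasureTheory Real Set Filter Nat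

section MittagLefflerAux

lemma aux_int_gamma {c r : ℝ} (hc : 0 < c) (hr : 0 < r) :
    IntegrableOn (fun t : ℝ => t ^ (c - 1) * Real.exp (-(r * t))) (Set.Ioi 0) := by
  have h0 : IntegrableOn (fun x : ℝ => Real.exp (-x) * x ^ (c - 1)) (Set.Ioi 0) :=
    Real.GammaIntegral_convergent hc
  have h1 : IntegrableOn (fun t : ℝ => Real.exp (-(r * t)) * (r * t) ^ (c - 1)) (Set.Ioi 0) := by
    have := (integrableOn_Ioi_comp_mul_left_iff
      (fun x : ℝ => Real.exp (-x) * x ^ (c - 1)) 0 hr).mpr (by simpa using h0)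
    simpa using this
  have h2 := h1.const_mul ((r : ℝ) ^ (c - 1))⁻¹
  refine IntegrableOn.congr_fun h2 (fun t ht => ?_) measurableSet_Ioi
  have ht' : (0:ℝ) < t := ht
  rw [Real.mul_rpow hr.le ht'.le]
  field_simp [(Real.rpow_pos_of_pos hr (c-1)).ne']

lemma aux_int_ml {c a : ℝ} (hc : 0 < c) (ha : 0 < a) :
    IntegrableOn (fun t : ℝ => t ^ (c - 1) * Real.exp (-t ^ a)) (Set.Ioi 0) := by
  have hmeas : Measurable fun t : ℝ => t ^ (c - 1) * Real.exp (-t ^ a) := by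
    fun_prop
  have h01 : IntegrableOn (fun t : ℝ => t ^ (c - 1) * Real.exp (-t ^ a)) (Set.Ioc 0 1) := by
    have hg : IntegrableOn (fun t : ℝ => t ^ (c - 1)) (Set.Ioc 0 1) := by
      have := intervalIntegral.intervalIntegrable_rpow' (a := 0) (b := 1) (r := c - 1)
        (by linarith)
      rwa [intervalIntegrable_iff_integrableOn_Ioc_of_le zero_le_one] at this
    refine Integrable.mono' hg hmeas.aestronglyMeasurable ?_
    filter_upwards [ae_restrict_mem measurableSet_Ioc] with t ht
    have ht0 : (0:ℝ) < t := ht.1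
    rw [Real.norm_eq_abs, abs_mul, abs_of_nonneg (Real.rpow_nonneg ht0.le _),
      abs_of_nonneg (Real.exp_nonneg _)]
    nth_rewrite 2 [← mul_one (t ^ (c - 1))]
    gcongr
    exact Real.exp_le_one_iff.mpr (neg_nonpos.mpr (by positivity))
  have h1i : IntegrableOn (fun t : ℝ => t ^ (c - 1) * Real.exp (-t ^ a)) (Set.Ioi 1) := by
    set n : ℕ := ⌈(c + 1) / a⌉₊ with hn
    have han : c + 1 ≤ a * n := by
      have := Nat.le_ceil ((c + 1) / a)
      calc c + 1 = a * ((c + 1) / a) := by field_simp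
        _ ≤ a * n := by gcongr
    have hg : IntegrableOn (fun t : ℝ => (n.factorial : ℝ) * t ^ (c - 1 - a * n))
        (Set.Ioi 1) := by
      refine (integrableOn_Ioi_rpow_of_lt ?_ one_pos).const_mul _
      linarith
    refine Integrable.mono' hg hmeas.aestronglyMeasurable ?_
    filter_upwards [ae_restrict_mem measurableSet_Ioi] with t ht
    have ht0 : (0:ℝ) < t := lt_trans one_pos ht
    have hpow : t ^ (a * (n:ℝ)) = (t ^ a) ^ n := by
      rw [← Real.rpow_natCast (t ^ a) n, ← Real.rpow_mul ht0.le]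
    have key : (t ^ a) ^ n / (n.factorial : ℝ) ≤ Real.exp (t ^ a) := by
      refine le_trans ?_ (Real.sum_le_exp_of_nonneg (by positivity) (n + 1))
      have := Finset.single_le_sum (f := fun i => (t ^ a) ^ i / (i.factorial : ℝ))
        (fun i _ => by positivity) (Finset.mem_range.mpr (Nat.lt_succ_self n))
      simpa using this
    have hexp : Real.exp (-t ^ a) ≤ (n.factorial : ℝ) / t ^ (a * (n:ℝ)) := by
      rw [Real.exp_neg, hpow]
      rw [show (n.factorial : ℝ) / (t ^ a) ^ n = ((t ^ a) ^ n / (n.factorial : ℝ))⁻¹ by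
        rw [inv_div]]
      exact inv_anti₀ (by positivity) key
    rw [Real.norm_eq_abs, abs_mul, abs_of_nonneg (Real.rpow_nonneg ht0.le _),
      abs_of_nonneg (Real.exp_nonneg _)]
    calc t ^ (c - 1) * Real.exp (-t ^ a)
        ≤ t ^ (c - 1) * ((n.factorial : ℝ) / t ^ (a * (n:ℝ))) := by gcongr
      _ = (n.factorial : ℝ) * t ^ (c - 1 - a * n) := by
          rw [show c - 1 - a * (n:ℝ) = c - 1 + -(a * (n:ℝ)) by ring, Real.rpow_add ht0,
            Real.rpow_neg ht0.le, div_eq_mul_inv]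
          ring
  rw [show Set.Ioi (0:ℝ) = Set.Ioc 0 1 ∪ Set.Ioi 1 from
    (Set.Ioc_union_Ioi_eq_Ioi zero_le_one).symm]
  exact h01.union h1i

lemma aux_summable {α : ℝ} (hα0 : 0 < α) {l : ℝ} (hl : 0 ≤ l) :
    Summable fun k : ℕ => l ^ k / Real.Gamma (α * k + 1) := by
  set b : ℝ := 2 * l + 2 with hb
  have hbl : l ≤ b := by linarith
  have hb2 : 0 < b := by positivity
  set m : ℕ := ⌈2 / α⌉₊ with hm
  set D : ℝ := (max b 1) ^ m with hD
  have hD1 : (1:ℝ) ≤ max b 1 := le_max_right _ _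
  have h0 : ∀ᶠ n : ℕ in atTop, D ^ n / n ! ≤ 1 :=
    (FloorSemiring.tendsto_pow_div_factorial_atTop D).eventually
      (eventually_le_nhds (by norm_num : (0:ℝ) < 1))
  obtain ⟨N₀, hN₀⟩ := eventually_atTop.mp h0
  set K : ℕ := ⌈((N₀:ℝ) + 2) / α⌉₊ with hK
  -- key eventual bound
  have hbound : ∀ k : ℕ, K ≤ k → l ^ k / Real.Gamma (α * k + 1) ≤ (1/2 : ℝ) ^ k := by
    intro k hk
    have hαk2 : (N₀ : ℝ) + 2 ≤ α * k := by
      have h1 : ((N₀:ℝ) + 2) / α ≤ K := Nat.le_ceil _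
      have h2 : (K:ℝ) ≤ k := Nat.cast_le.mpr hk
      calc (N₀:ℝ) + 2 = α * (((N₀:ℝ) + 2) / α) := by field_simp
        _ ≤ α * k := by have := h1.trans h2; gcongr
    have hαk : (2:ℝ) ≤ α * k := by
      have : (0:ℝ) ≤ N₀ := Nat.cast_nonneg _
      linarith
    set n : ℕ := ⌊α * k⌋₊ with hn
    have hfl : (α * (k:ℝ)) - 1 < n := Nat.sub_one_lt_floor _
    have hfl' : (n : ℝ) ≤ α * k := Nat.floor_le (by linarith)
    have hnN : N₀ ≤ n := by
      have : (N₀ : ℝ) ≤ n := by linarith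
      exact_mod_cast this
    have hn1 : (1:ℝ) ≤ n := by linarith
    have hn2 : α * (k:ℝ) / 2 ≤ n := by linarith
    -- Gamma lower bound
    have hg1 : Real.Gamma ((n:ℝ) + 1) ≤ Real.Gamma (α * k + 1) := by
      refine Real.Gamma_strictMonoOn_Ici.monotoneOn ?_ ?_ (by linarith)
      · simp only [Set.mem_Ici]; linarith
      · simp only [Set.mem_Ici]; linarith
    rw [Real.Gamma_nat_eq_factorial n] at hg1
    have hDn : D ^ n ≤ (n ! : ℝ) := by
      have := hN₀ n hnN
      rwa [div_le_one (by positivity)] at this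
    have hkmn : k ≤ m * n := by
      have h2a : (2 / α : ℝ) ≤ m := Nat.le_ceil _
      have : (k : ℝ) ≤ (m : ℝ) * n := by
        calc (k : ℝ) = (2 / α) * (α * k / 2) := by field_simp
          _ ≤ (m : ℝ) * n := by
              apply mul_le_mul h2a hn2 (by positivity) (Nat.cast_nonneg _)
      exact_mod_cast this
    have hbk : b ^ k ≤ Real.Gamma (α * k + 1) := by
      calc b ^ k ≤ (max b 1) ^ k := by gcongr; exact le_max_left _ _
        _ ≤ (max b 1) ^ (m * n) := pow_le_pow_right₀ hD1 hkmn
        _ = D ^ n := by rw [hD, ← pow_mul]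
        _ ≤ (n ! : ℝ) := hDn
        _ ≤ Real.Gamma (α * k + 1) := hg1
    have hΓpos : 0 < Real.Gamma (α * k + 1) := lt_of_lt_of_le (by positivity) hbk
    calc l ^ k / Real.Gamma (α * k + 1) ≤ l ^ k / b ^ k := by
          apply div_le_div_of_nonneg_left (by positivity) (by positivity) hbk
      _ = (l / b) ^ k := by rw [div_pow]
      _ ≤ (1/2 : ℝ) ^ k := by
          apply pow_le_pow_left₀ (by positivity)
          rw [div_le_div_iff₀ hb2 (by norm_num)]
          linarith
  -- conclude summability
  have hpos : ∀ k : ℕ, 0 < Real.Gamma (α * k + 1) := fun k =>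
    Real.Gamma_pos_of_pos (by positivity)
  rw [← summable_nat_add_iff K]
  refine Summable.of_nonneg_of_le (fun k => by have := hpos (k + K); positivity)
    (fun k => hbound (k + K) (Nat.le_add_left _ _)) ?_
  have hg : Summable fun k : ℕ => (1/2:ℝ) ^ k :=
    summable_geometric_of_lt_one (by norm_num) (by norm_num)
  exact (hg.mul_right ((1/2:ℝ) ^ K)).congr fun k => by rw [← pow_add]

lemma aux_moment {Ω : Type*} [MeasurableSpace Ω] (P : Measure Ω) [IsProbabilityMeasure P]
    (α : ℝ) (hα : α ∈ Set.Ioo (0:ℝ) 1) (S : Ω → ℝ) (hSmeas : Measurable S)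
    (hSnonneg : ∀ ω, 0 ≤ S ω) (hSpos : ∀ᵐ ω ∂P, 0 < S ω)
    (hLaplace : ∀ l : ℝ, 0 ≤ l → ∫ ω, Real.exp (-(l * S ω)) ∂P = Real.exp (-(l ^ α)))
    {c : ℝ} (hc : 0 < c) :
    ∫⁻ ω, ENNReal.ofReal (S ω ^ (-c)) ∂P
      = ENNReal.ofReal (Real.Gamma (c / α) / (α * Real.Gamma c)) := by
  obtain ⟨hα0, hα1⟩ := hα
  -- Laplace transform, lintegral version
  have hmeas1 : ∀ t : ℝ, Measurable fun ω => Real.exp (-(t * S ω)) := fun t =>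
    ((hSmeas.const_mul t).neg).exp
  have hL1 : ∀ t : ℝ, 0 ≤ t →
      ∫⁻ ω, ENNReal.ofReal (Real.exp (-(t * S ω))) ∂P
        = ENNReal.ofReal (Real.exp (-t ^ α)) := by
    intro t ht
    rw [show Real.exp (-t ^ α) = Real.exp (-(t ^ α)) from rfl, ← hLaplace t ht]
    refine (ofReal_integral_eq_lintegral_ofReal ?_ (ae_of_all _ fun ω => Real.exp_nonneg _)).symm
    refine Integrable.mono' (integrable_const (1:ℝ)) (hmeas1 t).aestronglyMeasurable ?_
    filter_upwards with ω
    rw [Real.norm_eq_abs, abs_of_nonneg (Real.exp_nonneg _)]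
    exact Real.exp_le_one_iff.mpr (neg_nonpos.mpr (mul_nonneg ht (hSnonneg ω)))
  -- measurability of the kernel
  have hFmeas : Measurable (fun p : Ω × ℝ =>
      ENNReal.ofReal (p.2 ^ (c - 1) * Real.exp (-(p.2 * S p.1)))) := by
    fun_prop
  have hswap := MeasureTheory.lintegral_lintegral_swap
    (μ := P) (ν := volume.restrict (Set.Ioi 0))
    (f := fun ω t => ENNReal.ofReal (t ^ (c - 1) * Real.exp (-(t * S ω))))
    hFmeas.aemeasurable
  have hmeasM : Measurable fun ω => ENNReal.ofReal (S ω ^ (-c)) := by fun_prop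
  -- LHS of Tonelli
  have hGpos := Real.Gamma_pos_of_pos hc
  have hlhs : ∫⁻ ω, (∫⁻ t in Set.Ioi 0,
        ENNReal.ofReal (t ^ (c - 1) * Real.exp (-(t * S ω)))) ∂P
      = ENNReal.ofReal (Real.Gamma c) * ∫⁻ ω, ENNReal.ofReal (S ω ^ (-c)) ∂P := by
    rw [← lintegral_const_mul _ hmeasM]
    refine lintegral_congr_ae ?_
    filter_upwards [hSpos] with ω hω
    rw [show (fun t => ENNReal.ofReal (t ^ (c - 1) * Real.exp (-(t * S ω))))
        = (fun t => ENNReal.ofReal (t ^ (c - 1) * Real.exp (-(S ω * t)))) from by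
      funext t; rw [mul_comm t (S ω)]]
    rw [← ofReal_integral_eq_lintegral_ofReal (aux_int_gamma hc hω)
      (by filter_upwards [ae_restrict_mem measurableSet_Ioi] with t ht;
          have ht0 : (0:ℝ) < t := ht; positivity)]
    rw [Real.integral_rpow_mul_exp_neg_mul_Ioi hc hω]
    rw [← ENNReal.ofReal_mul hGpos.le]
    congr 1
    rw [one_div, Real.inv_rpow (hSnonneg ω), ← Real.rpow_neg (hSnonneg ω), mul_comm]
  -- RHS of Tonelli
  have hrhs : ∫⁻ t in Set.Ioi 0, ∫⁻ ω,
        ENNReal.ofReal (t ^ (c - 1) * Real.exp (-(t * S ω))) ∂P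
      = ENNReal.ofReal (α⁻¹ * Real.Gamma (c / α)) := by
    have heq : ∀ᵐ t ∂(volume.restrict (Set.Ioi (0:ℝ))),
        ∫⁻ ω, ENNReal.ofReal (t ^ (c - 1) * Real.exp (-(t * S ω))) ∂P
          = ENNReal.ofReal (t ^ (c - 1) * Real.exp (-t ^ α)) := by
      filter_upwards [ae_restrict_mem measurableSet_Ioi] with t ht
      have ht0 : (0:ℝ) < t := ht
      calc ∫⁻ ω, ENNReal.ofReal (t ^ (c - 1) * Real.exp (-(t * S ω))) ∂P
          = ∫⁻ ω, ENNReal.ofReal (t ^ (c - 1)) * ENNReal.ofReal (Real.exp (-(t * S ω))) ∂P := by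
            simp_rw [← ENNReal.ofReal_mul (Real.rpow_nonneg ht0.le _)]
        _ = ENNReal.ofReal (t ^ (c - 1)) * ∫⁻ ω, ENNReal.ofReal (Real.exp (-(t * S ω))) ∂P :=
            lintegral_const_mul _ ((hmeas1 t).ennreal_ofReal)
        _ = ENNReal.ofReal (t ^ (c - 1)) * ENNReal.ofReal (Real.exp (-t ^ α)) := by
            rw [hL1 t ht0.le]
        _ = ENNReal.ofReal (t ^ (c - 1) * Real.exp (-t ^ α)) :=
            (ENNReal.ofReal_mul (Real.rpow_nonneg ht0.le _)).symm
    rw [lintegral_congr_ae heq,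
      ← ofReal_integral_eq_lintegral_ofReal (aux_int_ml hc hα0)
        (by filter_upwards [ae_restrict_mem measurableSet_Ioi] with t ht;
            have ht0 : (0:ℝ) < t := ht; positivity),
      integral_rpow_mul_exp_neg_rpow hα0 (by linarith : (-1:ℝ) < c - 1)]
    rw [sub_add_cancel, one_div]
  -- combine
  have hkey : ENNReal.ofReal (Real.Gamma c) * ∫⁻ ω, ENNReal.ofReal (S ω ^ (-c)) ∂P
      = ENNReal.ofReal (α⁻¹ * Real.Gamma (c / α)) := by
    rw [← hlhs, hswap, hrhs]
  have h2 : ENNReal.ofReal (Real.Gamma c) * ∫⁻ ω, ENNReal.ofReal (S ω ^ (-c)) ∂P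
      = ENNReal.ofReal (Real.Gamma c)
        * ENNReal.ofReal (Real.Gamma (c / α) / (α * Real.Gamma c)) := by
    rw [hkey, ← ENNReal.ofReal_mul hGpos.le]
    congr 1
    field_simp
  exact (ENNReal.mul_right_inj (by simpa using hGpos) (by simp)).mp h2

end MittagLefflerAux


/-- The Mittag--Leffler random variable `M = S^(-α)` obtained from a positive
`α`-stable random variable `S` (with `E[exp (-λ S)] = exp (-λ^α)`, `α ∈ (0,1)`,
`S > 0` a.s.) has Laplace transform the Mittag--Leffler function:
`E[exp (-λ M)] = ∑_{k} (-λ)^k / Γ(αk + 1)` for all `λ ≥ 0`. -/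
theorem mittagLeffler_laplace_transform
    {Ω : Type*} [MeasurableSpace Ω] (P : Measure Ω) [IsProbabilityMeasure P]
    (α : ℝ) (hα : α ∈ Set.Ioo (0 : ℝ) 1)
    (S : Ω → ℝ) (hSmeas : Measurable S) (hSnonneg : ∀ ω, 0 ≤ S ω)
    (hSpos : ∀ᵐ ω ∂P, 0 < S ω)
    (hLaplace : ∀ l : ℝ, 0 ≤ l →
      ∫ ω, Real.exp (-(l * S ω)) ∂P = Real.exp (-(l ^ α))) :
    ∀ l : ℝ, 0 ≤ l →
      ∫ ω, Real.exp (-(l * S ω ^ (-α))) ∂P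
        = ∑' k : ℕ, (-l) ^ k / Real.Gamma (α * k + 1) := by

  intro l hl
  have hα0 := hα.1
  set M : Ω → ℝ := fun ω => S ω ^ (-α) with hM
  have hMmeas : Measurable M := by fun_prop
  have hMnonneg : ∀ ω, 0 ≤ M ω := fun ω => Real.rpow_nonneg (hSnonneg ω) _
  have hΓpos : ∀ k : ℕ, 0 < Real.Gamma (α * k + 1) := fun k =>
    Real.Gamma_pos_of_pos (by positivity)
  -- moments of M
  have hmom : ∀ k : ℕ, ∫⁻ ω, ENNReal.ofReal (M ω ^ k) ∂P
      = ENNReal.ofReal ((k ! : ℝ) / Real.Gamma (α * k + 1)) := by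
    intro k
    rcases Nat.eq_zero_or_pos k with hk | hk
    · subst hk
      simp [Real.Gamma_one]
    · obtain ⟨j, rfl⟩ : ∃ j, k = j + 1 := ⟨k - 1, (Nat.succ_pred_eq_of_pos hk).symm⟩
      have hkR : (0:ℝ) < ((j:ℝ) + 1) := by positivity
      have hc : 0 < α * ((j:ℕ) + 1 : ℕ) := by push_cast; positivity
      have hcongr : (fun ω => ENNReal.ofReal (M ω ^ (j+1)))
          = fun ω => ENNReal.ofReal (S ω ^ (-(α * ((j:ℕ)+1:ℕ) : ℝ))) := by
        funext ω
        congr 1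
        rw [hM]
        rw [← Real.rpow_natCast (S ω ^ (-α)) (j+1), ← Real.rpow_mul (hSnonneg ω)]
        congr 1
        push_cast
        ring
      rw [hcongr, aux_moment P α hα S hSmeas hSnonneg hSpos hLaplace hc]
      congr 1
      have hne : α ≠ 0 := hα0.ne'
      have h1 : (α * ((j:ℕ)+1:ℕ) : ℝ) / α = ((j:ℕ)+1:ℕ) := by
        field_simp
      rw [h1]
      push_cast
      rw [show ((j:ℝ) + 1) = ((j:ℕ):ℝ) + 1 by push_cast; ring, Real.Gamma_nat_eq_factorial j]
      rw [show α * (((j:ℕ):ℝ) + 1) + 1 = (α * (((j:ℕ):ℝ) + 1)) + 1 by ring,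
        Real.Gamma_add_one (by push_cast at hc ⊢; exact hc.ne')]
      have hΓ2 : 0 < Real.Gamma (α * (((j:ℕ):ℝ) + 1)) :=
        Real.Gamma_pos_of_pos (by positivity)
      have hfj : (0:ℝ) < (j ! : ℝ) := by positivity
      rw [Nat.factorial_succ]
      push_cast
      field_simp
  -- integrability and integral values of M ^ k
  have hmeasMk : ∀ k : ℕ, AEStronglyMeasurable (fun ω => M ω ^ k) P :=
    fun k => (hMmeas.pow_const k).aestronglyMeasurable
  have hintval : ∀ k : ℕ, ∫ ω, M ω ^ k ∂P = (k ! : ℝ) / Real.Gamma (α * k + 1) := by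
    intro k
    rw [integral_eq_lintegral_of_nonneg_ae
      (ae_of_all _ fun ω => pow_nonneg (hMnonneg ω) k) (hmeasMk k), hmom k,
      ENNReal.toReal_ofReal (by have := hΓpos k; positivity)]
  -- series expansion of the exponential
  have hexp : ∀ ω, Real.exp (-(l * M ω)) = ∑' k : ℕ, (-(l * M ω)) ^ k / (k ! : ℝ) := by
    intro ω
    rw [Real.exp_eq_exp_ℝ, NormedSpace.exp_eq_tsum_div]
  have hfmeas : ∀ k : ℕ, AEStronglyMeasurable (fun ω => (-(l * M ω)) ^ k / (k ! : ℝ)) P := by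
    intro k
    exact (((hMmeas.const_mul l).neg.pow_const k).div_const _).aestronglyMeasurable
  -- the norm lintegrals
  have hnorm : ∀ k : ℕ, ∫⁻ ω, (‖(-(l * M ω)) ^ k / (k ! : ℝ)‖₊ : ENNReal) ∂P
      = ENNReal.ofReal (l ^ k / Real.Gamma (α * k + 1)) := by
    intro k
    have heq : ∀ ω, (‖(-(l * M ω)) ^ k / (k ! : ℝ)‖₊ : ENNReal)
        = ENNReal.ofReal (l ^ k / (k ! : ℝ)) * ENNReal.ofReal (M ω ^ k) := by
      intro ω
      rw [← ENNReal.ofReal_mul (div_nonneg (pow_nonneg hl k) (Nat.cast_nonneg _)),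
        ← enorm_eq_nnnorm, ← ofReal_norm]
      congr 1
      rw [Real.norm_eq_abs, abs_div, abs_pow, abs_neg, Nat.abs_cast,
        abs_of_nonneg (mul_nonneg hl (hMnonneg ω)), mul_pow]
      ring
    simp_rw [heq]
    rw [lintegral_const_mul _ (by fun_prop), hmom k,
      ← ENNReal.ofReal_mul (div_nonneg (pow_nonneg hl k) (Nat.cast_nonneg _))]
    congr 1
    have h1 : (0:ℝ) < k ! := by positivity
    have h2 := hΓpos k
    field_simp
  -- put it together
  calc ∫ ω, Real.exp (-(l * S ω ^ (-α))) ∂P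
      = ∫ ω, ∑' k : ℕ, (-(l * M ω)) ^ k / (k ! : ℝ) ∂P := by
        refine integral_congr_ae (ae_of_all _ fun ω => ?_)
        exact hexp ω
    _ = ∑' k : ℕ, ∫ ω, (-(l * M ω)) ^ k / (k ! : ℝ) ∂P := by
        refine integral_tsum hfmeas ?_
        simp_rw [enorm_eq_nnnorm, hnorm]
        rw [← ENNReal.ofReal_tsum_of_nonneg
          (fun k => by have := hΓpos k; positivity) (aux_summable hα0 hl)]
        exact ENNReal.ofReal_ne_top
    _ = ∑' k : ℕ, (-l) ^ k / Real.Gamma (α * k + 1) := by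
        refine tsum_congr fun k => ?_
        have hrw : (fun ω => (-(l * M ω)) ^ k / (k ! : ℝ))
            = fun ω => ((-l) ^ k / (k ! : ℝ)) * M ω ^ k := by
          funext ω
          rw [show -(l * M ω) = (-l) * M ω by ring, mul_pow]
          ring
        rw [hrw, integral_const_mul, hintval k]
        have h1 : (0:ℝ) < k ! := by positivity
        have h2 := hΓpos k
        field_simp
end

section
/- Let ν ∈ (0,1], μ > 0, and let s > μ^{1/ν}. Then the Laplace transform of the positive-Linnik (Mittag--Leffler) density satisfies ∫_0^∞ e^{-st} · μ t^{ν-1} E_{ν,ν}(-μ t^ν) dt = μ / (s^ν + μ), where E_{ν,ν}(z) = ∑_{k=0}^∞ z^k / Γ(νk + ν). -/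
open MeasureTheory Real

/-- The two-parameter Mittag--Leffler function
`E_{α,β}(z) = ∑' k, z^k / Γ(αk + β)`. -/
noncomputable def mittagLeffler2 (α β z : ℝ) : ℝ :=
  ∑' k : ℕ, z ^ k / Real.Gamma (α * k + β)

lemma integrableOn_rpow_mul_exp_neg_mul {a r : ℝ} (ha : 0 < a) (hr : 0 < r) :
    IntegrableOn (fun t : ℝ => t ^ (a - 1) * Real.exp (-(r * t))) (Set.Ioi 0) := by
  have := integrableOn_rpow_mul_exp_neg_mul_rpow (s := a - 1) (p := 1) (b := r)
    (by linarith) one_pos hr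
  refine this.congr_fun (fun t ht => ?_) measurableSet_Ioi
  simp only [Real.rpow_one, neg_mul]

/-- Laplace transform of the positive-Linnik (Mittag--Leffler) density:
for `ν ∈ (0,1]`, `μ > 0` and `s > μ^(1/ν)`,
`∫_0^∞ e^{-st} μ t^{ν-1} E_{ν,ν}(-μ t^ν) dt = μ / (s^ν + μ)`. -/
theorem laplace_transform_positive_linnik_density
    (ν : ℝ) (hν : ν ∈ Set.Ioc (0 : ℝ) 1) (μ : ℝ) (hμ : 0 < μ)
    (s : ℝ) (hs : μ ^ (1 / ν) < s) :
    ∫ t in Set.Ioi (0 : ℝ),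
        Real.exp (-(s * t)) * (μ * t ^ (ν - 1) * mittagLeffler2 ν ν (-(μ * t ^ ν)))
      = μ / (s ^ ν + μ) := by
  obtain ⟨hν0, hν1⟩ := hν
  have hν0' : ν ≠ 0 := ne_of_gt hν0
  have hs0 : 0 < s := lt_trans (Real.rpow_pos_of_pos hμ _) hs
  have hsν0 : 0 < s ^ ν := Real.rpow_pos_of_pos hs0 ν
  have hμs : μ < s ^ ν := by
    have h1 : (μ ^ (1 / ν)) ^ ν < s ^ ν :=
      Real.rpow_lt_rpow (Real.rpow_nonneg hμ.le _) hs hν0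
    rwa [← Real.rpow_mul hμ.le, one_div, inv_mul_cancel₀ hν0', Real.rpow_one] at h1
  set x : ℝ := μ * (1 / s) ^ ν with hxdef
  have hx_eq : x = μ / s ^ ν := by
    rw [hxdef, one_div, Real.inv_rpow hs0.le, div_eq_mul_inv]
  have hx_pos : 0 < x := by rw [hx_eq]; positivity
  have hx_lt : x < 1 := by rw [hx_eq, div_lt_one hsν0]; exact hμs
  set F : ℕ → ℝ → ℝ := fun k t =>
    (μ * (-μ) ^ k / Real.Gamma (ν * (k + 1))) * (t ^ (ν * (k + 1) - 1) * Real.exp (-(s * t)))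
    with hFdef
  have hak : ∀ k : ℕ, (0 : ℝ) < ν * (k + 1) := fun k => by positivity
  have hΓpos : ∀ k : ℕ, 0 < Real.Gamma (ν * (k + 1)) := fun k =>
    Real.Gamma_pos_of_pos (hak k)
  have hint : ∀ k : ℕ, IntegrableOn (F k) (Set.Ioi 0) := fun k =>
    (integrableOn_rpow_mul_exp_neg_mul (hak k) hs0).const_mul _
  have hpow : ∀ k : ℕ, (1 / s) ^ (ν * (k + 1)) = ((1 / s) ^ ν) ^ (k + 1) := by
    intro k
    rw [← Real.rpow_natCast ((1 / s) ^ ν) (k + 1), ← Real.rpow_mul (by positivity)]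
    push_cast; ring_nf
  -- value of each integral
  have hval : ∀ k : ℕ, (∫ t in Set.Ioi (0 : ℝ), F k t) = x * (-x) ^ k := by
    intro k
    rw [hFdef]
    simp only
    rw [MeasureTheory.integral_const_mul,
      Real.integral_rpow_mul_exp_neg_mul_Ioi (hak k) hs0, hpow k]
    rw [hxdef, show -(μ * (1 / s) ^ ν) = (-μ) * (1 / s) ^ ν from by ring, mul_pow,
      pow_succ]
    field_simp
  -- value of each norm integral
  have hnorm : ∀ k : ℕ, (∫ t in Set.Ioi (0 : ℝ), ‖F k t‖) = x ^ (k + 1) := by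
    intro k
    have hcong : ∀ t ∈ Set.Ioi (0 : ℝ), ‖F k t‖
        = (μ ^ (k + 1) / Real.Gamma (ν * (k + 1)))
          * (t ^ (ν * (k + 1) - 1) * Real.exp (-(s * t))) := by
      intro t ht
      have ht0 : (0 : ℝ) < t := ht
      rw [hFdef]
      simp only
      rw [Real.norm_eq_abs, abs_mul,
        abs_of_nonneg (mul_nonneg (Real.rpow_nonneg ht0.le _) (Real.exp_nonneg _)),
        abs_div, abs_mul, abs_pow, abs_neg,
        abs_of_pos hμ, abs_of_pos (hΓpos k), ← pow_succ']
    rw [setIntegral_congr_fun measurableSet_Ioi hcong, MeasureTheory.integral_const_mul,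
      Real.integral_rpow_mul_exp_neg_mul_Ioi (hak k) hs0, hpow k, hxdef, mul_pow]
    field_simp
    try ring
  have hsummable : Summable fun k : ℕ => ∫ t in Set.Ioi (0 : ℝ), ‖F k t‖ := by
    simp_rw [hnorm, pow_succ]
    exact (summable_geometric_of_lt_one hx_pos.le hx_lt).mul_right x
  -- pointwise equality of the integrand with the sum
  have hsum_eq : ∀ t ∈ Set.Ioi (0 : ℝ),
      Real.exp (-(s * t)) * (μ * t ^ (ν - 1) * mittagLeffler2 ν ν (-(μ * t ^ ν)))
        = ∑' k : ℕ, F k t := by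
    intro t ht
    have ht0 : (0 : ℝ) < t := ht
    rw [mittagLeffler2, ← tsum_mul_left, ← tsum_mul_left]
    refine tsum_congr fun k => ?_
    have hz : (-(μ * t ^ ν)) ^ k = (-μ) ^ k * t ^ (ν * k) := by
      rw [show -(μ * t ^ ν) = (-μ) * t ^ ν from by ring, mul_pow,
        ← Real.rpow_natCast (t ^ ν) k, ← Real.rpow_mul ht0.le]
    have hΓ : Real.Gamma (ν * k + ν) = Real.Gamma (ν * (k + 1)) := by
      push_cast; ring_nf
    have htt : t ^ (ν - 1) * t ^ (ν * k) = t ^ (ν * (k + 1) - 1) := by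
      rw [← Real.rpow_add ht0]; push_cast; ring_nf
    rw [hz, hΓ, hFdef]
    simp only
    rw [← htt]
    field_simp
    try ring
  rw [setIntegral_congr_fun measurableSet_Ioi hsum_eq,
    ← MeasureTheory.integral_tsum_of_summable_integral_norm hint hsummable]
  simp_rw [hval]
  rw [tsum_mul_left, tsum_geometric_of_norm_lt_one (by
    rw [norm_neg, Real.norm_eq_abs, abs_of_pos hx_pos]; exact hx_lt)]
  rw [hx_eq]
  have h1 : s ^ ν + μ ≠ 0 := by positivity
  field_simp
  rw [sub_neg_eq_add, div_self h1]
end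

section
/- Let ν ∈ (0,1], μ > 0, k ∈ ℕ, and let s > μ^{1/ν}. Then ∫_0^∞ e^{-st} (μ t^ν)^k E^{k+1}_{ν, νk+1}(-μ t^ν) dt = μ^k s^{ν-1} / (s^ν + μ)^{k+1}, where E^γ_{α,β}(z) = ∑_{j=0}^∞ Γ(γ + j) z^j / (Γ(γ) · j! · Γ(αj + β)) is the three-parameter generalized Mittag--Leffler function. -/
open MeasureTheory Real

/-- The three-parameter (Prabhakar) generalized Mittag--Leffler function
`E^γ_{α,β}(z) = ∑_{j} Γ(γ + j) z^j / (Γ(γ) j! Γ(αj + β))`. -/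
noncomputable def mittagLeffler3 (α β γ z : ℝ) : ℝ :=
  ∑' j : ℕ,
    Real.Gamma (γ + j) * z ^ j /
      (Real.Gamma γ * (Nat.factorial j : ℝ) * Real.Gamma (α * j + β))

open Set in
lemma aux_integrableOn_rpow_exp {a r : ℝ} (ha : 0 ≤ a) (hr : 0 < r) :
    IntegrableOn (fun t : ℝ => t ^ a * Real.exp (-(r * t))) (Set.Ioi 0) := by
  have h := integrableOn_rpow_mul_exp_neg_mul_rpow (p := 1) (s := a) (b := r)
    (by linarith) one_pos hr
  refine h.congr_fun (fun t ht => ?_) measurableSet_Ioi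
  beta_reduce
  rw [Real.rpow_one, neg_mul]

/-- Laplace transform of the state probabilities of the fractional Poisson
process: for `ν ∈ (0,1]`, `μ > 0`, `k ∈ ℕ`, and `s > μ^(1/ν)`,
`∫_0^∞ e^{-st} (μ t^ν)^k E^{k+1}_{ν,νk+1}(-μ t^ν) dt = μ^k s^{ν-1} / (s^ν + μ)^{k+1}`. -/
theorem laplace_transform_fractional_poisson_state_prob
    (ν : ℝ) (hν : ν ∈ Set.Ioc (0 : ℝ) 1) (μ : ℝ) (hμ : 0 < μ) (k : ℕ)
    (s : ℝ) (hs : μ ^ (1 / ν) < s) :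
    ∫ t in Set.Ioi (0 : ℝ),
        Real.exp (-(s * t)) * ((μ * t ^ ν) ^ k *
          mittagLeffler3 ν (ν * k + 1) (k + 1) (-(μ * t ^ ν)))
      = μ ^ k * s ^ (ν - 1) / (s ^ ν + μ) ^ (k + 1) := by
  obtain ⟨hν0, hν1⟩ := hν
  have hs0 : 0 < s := lt_trans (Real.rpow_pos_of_pos hμ _) hs
  have hsν : μ < s ^ ν := by
    have h1 : (μ ^ (1 / ν)) ^ ν < s ^ ν :=
      Real.rpow_lt_rpow (Real.rpow_nonneg hμ.le _) hs hν0
    rwa [← Real.rpow_mul hμ.le, one_div, inv_mul_cancel₀ hν0.ne', Real.rpow_one] at h1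
  have hsνpos : 0 < s ^ ν := Real.rpow_pos_of_pos hs0 ν
  set x : ℝ := μ / s ^ ν with hxdef
  have hx0 : 0 < x := div_pos hμ hsνpos
  have hx1 : x < 1 := (div_lt_one hsνpos).2 hsν
  have hxnorm : ‖-x‖ < 1 := by rw [norm_neg, Real.norm_eq_abs, abs_of_pos hx0]; exact hx1
  -- the summands
  set F : ℕ → ℝ → ℝ := fun j t =>
    (μ ^ k * ((j + k).choose k : ℝ) * (-μ) ^ j / Real.Gamma (ν * ((j : ℝ) + k) + 1)) *
      (t ^ (ν * ((j : ℝ) + k)) * Real.exp (-(s * t))) with hFdef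
  have hGpos : ∀ j : ℕ, 0 < Real.Gamma (ν * ((j : ℝ) + k) + 1) := fun j =>
    Real.Gamma_pos_of_pos (by positivity)
  -- pointwise identity on Ioi 0
  have hpt : ∀ t ∈ Set.Ioi (0 : ℝ),
      Real.exp (-(s * t)) * ((μ * t ^ ν) ^ k *
        mittagLeffler3 ν (ν * k + 1) (k + 1) (-(μ * t ^ ν))) = ∑' j : ℕ, F j t := by
    intro t ht
    rw [Set.mem_Ioi] at ht
    rw [mittagLeffler3, ← tsum_mul_left, ← tsum_mul_left]
    refine tsum_congr fun j => ?_
    have hG1 : ((k : ℝ) + 1 + j) = ((k + j : ℕ) : ℝ) + 1 := by push_cast; ring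
    have hG2 : ((k : ℝ) + 1) = ((k : ℕ) : ℝ) + 1 := by norm_num
    have hG3 : ν * (j : ℝ) + (ν * k + 1) = ν * ((j : ℝ) + k) + 1 := by ring
    rw [hG1, hG2, hG3, Real.Gamma_nat_eq_factorial, Real.Gamma_nat_eq_factorial]
    have hfac : ((k + j).factorial : ℝ) = ((j + k).choose k : ℝ) * j.factorial * k.factorial := by
      rw_mod_cast [add_comm k j, ← Nat.add_choose_mul_factorial_mul_factorial j k]
    rw [hfac]
    have hsplit : t ^ (ν * ((j : ℝ) + k)) = (t ^ ν) ^ j * (t ^ ν) ^ k := by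
      rw [← pow_add, ← Real.rpow_natCast (t ^ ν) (j + k), ← Real.rpow_mul ht.le]
      push_cast
      try ring_nf
    rw [hFdef]
    simp only []
    rw [hsplit]
    have hz : (-(μ * t ^ ν)) ^ j = (-μ) ^ j * (t ^ ν) ^ j := by
      rw [show -(μ * t ^ ν) = (-μ) * t ^ ν by ring, mul_pow]
    rw [hz, mul_pow]
    have hkf : (k.factorial : ℝ) ≠ 0 := by positivity
    have hjf : (j.factorial : ℝ) ≠ 0 := by positivity
    have hGne := (hGpos j).ne'
    field_simp
  rw [MeasureTheory.setIntegral_congr_fun measurableSet_Ioi hpt]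
  -- integrability of each summand
  have hint : ∀ j : ℕ, IntegrableOn (F j) (Set.Ioi 0) := by
    intro j
    exact (aux_integrableOn_rpow_exp (by positivity) hs0).const_mul _
  -- value of each integral
  have hIval : ∀ j : ℕ, ∫ t in Set.Ioi (0 : ℝ), F j t
      = (μ ^ k * (1 / s) ^ (ν * k + 1)) * (((j + k).choose k : ℝ) * (-x) ^ j) := by
    intro j
    rw [hFdef]
    simp only []
    rw [MeasureTheory.integral_const_mul]
    have hInt := integral_rpow_mul_exp_neg_mul_Ioi
      (a := ν * ((j : ℝ) + k) + 1) (r := s) (by positivity) hs0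
    rw [add_sub_cancel_right] at hInt
    rw [hInt]
    have hGne := (hGpos j).ne'
    have hstep : ∀ A P : ℝ, A / Real.Gamma (ν * ((j : ℝ) + k) + 1)
        * (P * Real.Gamma (ν * ((j : ℝ) + k) + 1)) = A * P := by
      intro A P; field_simp
    rw [hstep]
    have hsplit : (1 / s : ℝ) ^ (ν * ((j : ℝ) + k) + 1)
        = ((1 / s : ℝ) ^ ν) ^ j * (1 / s) ^ (ν * k + 1) := by
      rw [show ν * ((j : ℝ) + k) + 1 = ν * j + (ν * k + 1) by ring,
        Real.rpow_add (by positivity), Real.rpow_mul (by positivity : (0:ℝ) ≤ 1 / s),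
        Real.rpow_natCast]
    rw [hsplit]
    have hmx : (-μ) * (1 / s : ℝ) ^ ν = -x := by
      rw [one_div, Real.inv_rpow hs0.le, hxdef]
      field_simp
    have hmp : (-μ : ℝ) ^ j * ((1 / s : ℝ) ^ ν) ^ j = (-x) ^ j := by
      rw [← mul_pow, hmx]
    rw [← hmp]
    ring
  -- summability of the integrals of norms
  have hsummable : Summable fun j : ℕ => ∫ t in Set.Ioi (0 : ℝ), ‖F j t‖ := by
    have key : ∀ j : ℕ, ∫ t in Set.Ioi (0 : ℝ), ‖F j t‖
        = |μ ^ k * ((j + k).choose k : ℝ) * (-μ) ^ j / Real.Gamma (ν * ((j : ℝ) + k) + 1)|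
          * ((1 / s) ^ (ν * ((j : ℝ) + k) + 1) * Real.Gamma (ν * ((j : ℝ) + k) + 1)) := by
      intro j
      have : ∀ t ∈ Set.Ioi (0 : ℝ), ‖F j t‖
          = |μ ^ k * ((j + k).choose k : ℝ) * (-μ) ^ j / Real.Gamma (ν * ((j : ℝ) + k) + 1)|
            * (t ^ (ν * ((j : ℝ) + k)) * Real.exp (-(s * t))) := by
        intro t ht
        rw [Set.mem_Ioi] at ht
        rw [hFdef]
        simp only []
        rw [norm_mul, Real.norm_eq_abs, Real.norm_eq_abs,
          abs_of_pos (by positivity : (0:ℝ) < t ^ (ν * ((j : ℝ) + k)) * Real.exp (-(s * t)))]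
      rw [MeasureTheory.setIntegral_congr_fun measurableSet_Ioi this,
        MeasureTheory.integral_const_mul]
      congr 1
      have hInt := integral_rpow_mul_exp_neg_mul_Ioi
        (a := ν * ((j : ℝ) + k) + 1) (r := s) (by positivity) hs0
      rw [add_sub_cancel_right] at hInt
      rw [hInt]
    rw [funext key]
    have hb : ∀ j : ℕ,
        |μ ^ k * ((j + k).choose k : ℝ) * (-μ) ^ j / Real.Gamma (ν * ((j : ℝ) + k) + 1)|
          * ((1 / s) ^ (ν * ((j : ℝ) + k) + 1) * Real.Gamma (ν * ((j : ℝ) + k) + 1))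
        = (μ ^ k * (1 / s) ^ (ν * k + 1)) * (((j + k).choose k : ℝ) * x ^ j) := by
      intro j
      have hGne := (hGpos j).ne'
      have hstep : ∀ A P : ℝ, A / Real.Gamma (ν * ((j : ℝ) + k) + 1)
          * (P * Real.Gamma (ν * ((j : ℝ) + k) + 1)) = A * P := by
        intro A P; field_simp
      rw [abs_div, abs_of_pos (hGpos j), hstep]
      rw [abs_mul, abs_mul, abs_pow, abs_pow, abs_neg, abs_of_pos hμ,
        abs_of_nonneg (by positivity : (0:ℝ) ≤ ((j + k).choose k : ℝ))]
      have hsplit : (1 / s : ℝ) ^ (ν * ((j : ℝ) + k) + 1)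
          = ((1 / s : ℝ) ^ ν) ^ j * (1 / s) ^ (ν * k + 1) := by
        rw [show ν * ((j : ℝ) + k) + 1 = ν * j + (ν * k + 1) by ring,
          Real.rpow_add (by positivity), Real.rpow_mul (by positivity : (0:ℝ) ≤ 1 / s),
          Real.rpow_natCast]
      rw [hsplit]
      have hmx : μ * (1 / s : ℝ) ^ ν = x := by
        rw [one_div, Real.inv_rpow hs0.le, hxdef]; field_simp
      have hmp : (μ : ℝ) ^ j * ((1 / s : ℝ) ^ ν) ^ j = x ^ j := by rw [← mul_pow, hmx]
      rw [← hmp]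
      ring
    rw [funext hb]
    exact (summable_choose_mul_geometric_of_norm_lt_one (R := ℝ) k
      (by rw [Real.norm_eq_abs, abs_of_pos hx0]; exact hx1)).mul_left _
  rw [← MeasureTheory.integral_tsum_of_summable_integral_norm hint hsummable]
  rw [funext hIval, tsum_mul_left, tsum_choose_mul_geometric_of_norm_lt_one k hxnorm]
  -- final algebra
  rw [sub_neg_eq_add]
  have h1x : (1 : ℝ) + x = (s ^ ν + μ) / s ^ ν := by
    rw [hxdef]; field_simp
  have hden : (0:ℝ) < (s ^ ν + μ) ^ (k + 1) := by positivity
  rw [h1x, div_pow, one_div ((s ^ ν + μ) ^ (k + 1) / (s ^ ν) ^ (k + 1)),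
    inv_div]
  have hpow : ((s ^ ν : ℝ)) ^ (k + 1) = s ^ (ν * (k + 1 : ℕ)) := by
    rw [Real.rpow_mul hs0.le, Real.rpow_natCast]
  have hinv : (1 / s : ℝ) ^ (ν * k + 1) = s ^ (-(ν * k + 1)) := by
    rw [one_div, ← Real.rpow_neg_one s, ← Real.rpow_mul hs0.le, neg_one_mul]
  rw [hpow, hinv,
    show μ ^ k * s ^ (-(ν * (k:ℝ) + 1)) * (s ^ (ν * ((k + 1 : ℕ) : ℝ)) / (s ^ ν + μ) ^ (k + 1))
      = μ ^ k * (s ^ (-(ν * (k:ℝ) + 1)) * s ^ (ν * ((k + 1 : ℕ) : ℝ))) / (s ^ ν + μ) ^ (k + 1)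
      by ring,
    ← Real.rpow_add hs0,
    show -(ν * (k:ℝ) + 1) + ν * ((k + 1 : ℕ) : ℝ) = ν - 1 by push_cast; ring]
end

section
/- Let ν ∈ (0,1] and μ > 0. Let (T_j)_{j≥1} be an i.i.d. sequence of nonnegative random variables, each with Laplace transform E[e^{-sT_1}] = μ / (s^ν + μ) for all s ≥ 0, and define the renewal counting process N(t) := sup{ k ∈ ℕ : T_1 + ⋯ + T_k ≤ t } (with N(t) = 0 if T_1 > t). Then for every k ∈ ℕ and every s > 0, ∫_0^∞ e^{-st} P(N(t) = k) dt = μ^k s^{ν - 1} / (s^ν + μ)^{k+1}. -/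
open MeasureTheory Real ProbabilityTheory

/-- The renewal counting process associated to the inter-arrival times `T`:
`N t = sup { k : T 0 + ⋯ + T (k-1) ≤ t }` (with `N t = 0` if `T 0 > t`). -/
noncomputable def renewalCount {Ω : Type*} (T : ℕ → Ω → ℝ) (t : ℝ) (ω : Ω) : ℕ :=
  sSup {k : ℕ | ∑ i ∈ Finset.range k, T i ω ≤ t}

open Set Filter ENNReal

lemma exp_laplace_tail_integral {s : ℝ} (hs : 0 < s) (a : ℝ) :
    ∫ t in Set.Ioi a, Real.exp (-(s * t)) = Real.exp (-(s * a)) / s := by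
  have hderiv : ∀ x ∈ Set.Ici a,
      HasDerivAt (fun t : ℝ => -Real.exp (-(s * t)) / s) (Real.exp (-(s * x))) x := by
    intro x _
    have h1 : HasDerivAt (fun t : ℝ => -(s * t)) (-s) x := by
      have := ((hasDerivAt_id x).const_mul s).neg
      exact this.congr_deriv (by simp)
    have h2 := (h1.exp.neg).div_const s
    refine h2.congr_deriv ?_
    field_simp
  have hint : IntegrableOn (fun t : ℝ => Real.exp (-(s * t))) (Set.Ioi a) := by
    simpa [neg_mul] using exp_neg_integrableOn_Ioi a hs
  have htend : Tendsto (fun t : ℝ => -Real.exp (-(s * t)) / s) atTop (nhds 0) := by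
    have h1 : Tendsto (fun t : ℝ => -(s * t)) atTop atBot := by
      exact tendsto_neg_atBot_iff.mpr (tendsto_id.const_mul_atTop hs)
    have h2 : Tendsto (fun t : ℝ => Real.exp (-(s * t))) atTop (nhds 0) :=
      Real.tendsto_exp_atBot.comp h1
    simpa using (h2.neg).div_const s
  have hfin := MeasureTheory.integral_Ioi_of_hasDerivAt_of_tendsto' hderiv hint htend
  rw [hfin]
  field_simp
  ring

lemma laplace_cdf_aux {Ω : Type*} [MeasurableSpace Ω] (P : Measure Ω) [IsProbabilityMeasure P]
    (X : Ω → ℝ) (hX : Measurable X) (hX0 : ∀ ω, 0 ≤ X ω) {s : ℝ} (hs : 0 < s) :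
    ∫ t in Set.Ioi (0:ℝ), Real.exp (-(s * t)) * (P {ω | X ω ≤ t}).toReal
      = (∫ ω, Real.exp (-(s * X ω)) ∂P) / s := by
  have hFmono : Monotone (fun t => (P {ω | X ω ≤ t}).toReal) := fun a b hab =>
    ENNReal.toReal_mono (measure_ne_top _ _) (measure_mono fun ω h => le_trans h hab)
  have hFmeas : Measurable fun t => (P {ω | X ω ≤ t}).toReal := hFmono.measurable
  set S : Set (ℝ × Ω) := {p : ℝ × Ω | X p.2 ≤ p.1} with hSdef
  have hS : MeasurableSet S := measurableSet_le (hX.comp measurable_snd) measurable_fst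
  set f : ℝ → Ω → ℝ≥0∞ :=
    fun t ω => ENNReal.ofReal (Real.exp (-(s * t))) * S.indicator (1 : ℝ × Ω → ℝ≥0∞) (t, ω)
    with hfdef
  have hfmeas : Measurable (Function.uncurry f) := by
    apply Measurable.mul
    · exact ((measurable_fst.const_mul s).neg.exp).ennreal_ofReal
    · exact measurable_one.indicator hS
  have h1 : ∫ t in Set.Ioi (0:ℝ), Real.exp (-(s * t)) * (P {ω | X ω ≤ t}).toReal
      = (∫⁻ t in Set.Ioi (0:ℝ),
          ENNReal.ofReal (Real.exp (-(s * t)) * (P {ω | X ω ≤ t}).toReal)).toReal := by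
    apply integral_eq_lintegral_of_nonneg_ae
    · exact ae_of_all _ fun t => mul_nonneg (Real.exp_pos _).le ENNReal.toReal_nonneg
    · exact ((measurable_id.const_mul s).neg.exp.mul hFmeas).aestronglyMeasurable
  have h2 : ∀ t : ℝ, ENNReal.ofReal (Real.exp (-(s * t)) * (P {ω | X ω ≤ t}).toReal)
      = ∫⁻ ω, f t ω ∂P := by
    intro t
    have hset : ∀ ω : Ω, S.indicator (1 : ℝ × Ω → ℝ≥0∞) (t, ω)
        = ({ω : Ω | X ω ≤ t}).indicator (1 : Ω → ℝ≥0∞) ω := by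
      intro ω
      by_cases h : X ω ≤ t <;> simp [Set.indicator_apply, hSdef, Set.mem_setOf_eq, h]
    simp only [hfdef, hset]
    have hms : MeasurableSet {ω : Ω | X ω ≤ t} := hX measurableSet_Iic
    rw [lintegral_const_mul _ (measurable_one.indicator hms), lintegral_indicator hms _]
    simp only [Pi.one_apply, setLIntegral_one]
    rw [ENNReal.ofReal_mul (Real.exp_pos _).le, ENNReal.ofReal_toReal (measure_ne_top _ _)]
  have h3 : ∫⁻ t in Set.Ioi (0:ℝ), (∫⁻ ω, f t ω ∂P)
      = ∫⁻ ω, (∫⁻ t in Set.Ioi (0:ℝ), f t ω) ∂P :=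
    lintegral_lintegral_swap hfmeas.aemeasurable
  have h4 : ∀ ω : Ω, (∫⁻ t in Set.Ioi (0:ℝ), f t ω)
      = ENNReal.ofReal (Real.exp (-(s * X ω)) / s) := by
    intro ω
    have hset : ∀ t : ℝ, f t ω
        = (Set.Ici (X ω)).indicator (fun t => ENNReal.ofReal (Real.exp (-(s * t)))) t := by
      intro t
      by_cases h : X ω ≤ t <;>
        simp [hfdef, Set.indicator_apply, hSdef, Set.mem_setOf_eq, h, Set.mem_Ici]
    simp only [hset]
    rw [lintegral_indicator measurableSet_Ici _, Measure.restrict_restrict measurableSet_Ici]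
    have hae : ((Set.Ici (X ω) ∩ Set.Ioi (0:ℝ) : Set ℝ)) =ᵐ[volume] (Set.Ioi (X ω) : Set ℝ) := by
      rcases eq_or_lt_of_le (hX0 ω) with h | h
      · rw [← h]
        have he : Set.Ici (0:ℝ) ∩ Set.Ioi 0 = Set.Ioi 0 :=
          Set.inter_eq_right.mpr fun x hx => Set.mem_Ici.mpr (le_of_lt hx)
        rw [he]
        exact EventuallyEq.rfl
      · have he : Set.Ici (X ω) ∩ Set.Ioi (0:ℝ) = Set.Ici (X ω) :=
          Set.inter_eq_left.mpr fun x hx => Set.mem_Ioi.mpr (lt_of_lt_of_le h hx)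
        rw [he]
        exact Ioi_ae_eq_Ici.symm
    rw [Measure.restrict_congr_set hae]
    have hint : IntegrableOn (fun t : ℝ => Real.exp (-(s * t))) (Set.Ioi (X ω)) := by
      simpa [neg_mul] using exp_neg_integrableOn_Ioi (X ω) hs
    rw [← ofReal_integral_eq_lintegral_ofReal hint (ae_of_all _ fun t => (Real.exp_pos _).le),
      exp_laplace_tail_integral hs]
  have hint5 : Integrable (fun ω => Real.exp (-(s * X ω)) / s) P := by
    refine Integrable.mono' (integrable_const (1 / s))
      (((hX.const_mul s).neg.exp.div_const s).aestronglyMeasurable) (ae_of_all _ fun ω => ?_)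
    rw [Real.norm_eq_abs, abs_of_nonneg (by positivity)]
    gcongr
    exact Real.exp_le_one_iff.mpr (neg_nonpos.mpr (mul_nonneg hs.le (hX0 ω)))
  calc ∫ t in Set.Ioi (0:ℝ), Real.exp (-(s * t)) * (P {ω | X ω ≤ t}).toReal
      = (∫⁻ t in Set.Ioi (0:ℝ),
          ENNReal.ofReal (Real.exp (-(s * t)) * (P {ω | X ω ≤ t}).toReal)).toReal := h1
    _ = (∫⁻ t in Set.Ioi (0:ℝ), (∫⁻ ω, f t ω ∂P)).toReal := by rw [lintegral_congr h2]
    _ = (∫⁻ ω, (∫⁻ t in Set.Ioi (0:ℝ), f t ω) ∂P).toReal := by rw [h3]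
    _ = (∫⁻ ω, ENNReal.ofReal (Real.exp (-(s * X ω)) / s) ∂P).toReal := by
        rw [lintegral_congr h4]
    _ = (ENNReal.ofReal (∫ ω, Real.exp (-(s * X ω)) / s ∂P)).toReal := by
        rw [ofReal_integral_eq_lintegral_ofReal hint5 (ae_of_all _ fun ω => by positivity)]
    _ = (∫ ω, Real.exp (-(s * X ω)) ∂P) / s := by
        rw [integral_div, ENNReal.toReal_ofReal
          (div_nonneg (integral_nonneg fun ω => (Real.exp_pos _).le) hs.le)]

/-- Laplace transform of the state probabilities of the fractional Poisson
process, constructed as a renewal process with i.i.d. positive-Linnik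
(Mittag--Leffler distributed) inter-arrival times: for every `k ∈ ℕ` and `s > 0`,
`∫_0^∞ e^{-st} P(N t = k) dt = μ^k s^{ν-1} / (s^ν + μ)^{k+1}`. -/
theorem fractional_poisson_laplace_state_prob
    {Ω : Type*} [MeasurableSpace Ω] (P : Measure Ω) [IsProbabilityMeasure P]
    (ν : ℝ) (hν : ν ∈ Set.Ioc (0 : ℝ) 1) (μ : ℝ) (hμ : 0 < μ)
    (T : ℕ → Ω → ℝ) (hTmeas : ∀ j, Measurable (T j))
    (hTnonneg : ∀ j ω, 0 ≤ T j ω)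
    (hTiid : iIndepFun T P)
    (hTident : ∀ j, Measure.map (T j) P = Measure.map (T 0) P)
    (hTLaplace : ∀ s : ℝ, 0 ≤ s →
      ∫ ω, Real.exp (-(s * T 0 ω)) ∂P = μ / (s ^ ν + μ)) :
    ∀ (k : ℕ) (s : ℝ), 0 < s →
      ∫ t in Set.Ioi (0 : ℝ),
          Real.exp (-(s * t)) * (P {ω | renewalCount T t ω = k}).toReal
        = μ ^ k * s ^ (ν - 1) / (s ^ ν + μ) ^ (k + 1) := by
  -- partial sums
  have hSmeas : ∀ m : ℕ, Measurable (fun ω => ∑ i ∈ Finset.range m, T i ω) := fun m =>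
    Finset.measurable_sum _ fun i _ => hTmeas i
  have hSmono : ∀ ω : Ω, Monotone fun m => ∑ i ∈ Finset.range m, T i ω := fun ω a b hab =>
    Finset.sum_le_sum_of_subset_of_nonneg (Finset.range_subset_range.mpr hab)
      fun i _ _ => hTnonneg i ω
  have hS0 : ∀ (m : ℕ) (ω : Ω), 0 ≤ ∑ i ∈ Finset.range m, T i ω := fun m ω =>
    Finset.sum_nonneg fun i _ => hTnonneg i ω
  -- Laplace transform of the partial sums
  have hlap : ∀ (m : ℕ) (u : ℝ), 0 ≤ u →
      ∫ ω, Real.exp (-(u * ∑ i ∈ Finset.range m, T i ω)) ∂P = (μ / (u ^ ν + μ)) ^ m := by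
    intro m u hu
    have h0 : ∀ j : ℕ, mgf (T j) P (-u) = μ / (u ^ ν + μ) := by
      intro j
      have hc : Continuous fun x : ℝ => Real.exp (-u * x) :=
        Real.continuous_exp.comp (continuous_const.mul continuous_id)
      calc mgf (T j) P (-u)
          = ∫ x, Real.exp (-u * x) ∂(Measure.map (T j) P) :=
            (integral_map (hTmeas j).aemeasurable hc.aestronglyMeasurable).symm
        _ = ∫ x, Real.exp (-u * x) ∂(Measure.map (T 0) P) := by rw [hTident j]
        _ = ∫ ω, Real.exp (-u * T 0 ω) ∂P :=
            integral_map (hTmeas 0).aemeasurable hc.aestronglyMeasurable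
        _ = μ / (u ^ ν + μ) := by
            simpa [neg_mul] using hTLaplace u hu
    have hsum := hTiid.mgf_sum hTmeas (Finset.range m) (t := -u)
    calc ∫ ω, Real.exp (-(u * ∑ i ∈ Finset.range m, T i ω)) ∂P
        = mgf (∑ i ∈ Finset.range m, T i) P (-u) := by
          rw [mgf]
          congr 1
          funext ω
          simp [Finset.sum_apply, neg_mul]
      _ = ∏ i ∈ Finset.range m, mgf (T i) P (-u) := hsum
      _ = (μ / (u ^ ν + μ)) ^ m := by
          rw [Finset.prod_congr rfl fun i _ => h0 i, Finset.prod_const, Finset.card_range]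
  -- the tail event is null
  have hnull : ∀ t : ℝ, P (⋂ m : ℕ, {ω | ∑ i ∈ Finset.range m, T i ω ≤ t}) = 0 := by
    intro t
    set A : Set Ω := ⋂ m : ℕ, {ω | ∑ i ∈ Finset.range m, T i ω ≤ t} with hA
    have hbd : ∀ m : ℕ, (P A).toReal ≤ Real.exp t * (μ / (1 + μ)) ^ m := by
      intro m
      have hintm : Integrable (fun ω => Real.exp (-1 * ∑ i ∈ Finset.range m, T i ω)) P := by
        refine Integrable.mono' (integrable_const 1)
          (((hSmeas m).const_mul (-1)).exp.aestronglyMeasurable) (ae_of_all _ fun ω => ?_)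
        rw [Real.norm_eq_abs, abs_of_nonneg (Real.exp_pos _).le]
        exact Real.exp_le_one_iff.mpr (by nlinarith [hS0 m ω])
      have hcher := measure_le_le_exp_mul_mgf (μ := P)
        (X := fun ω => ∑ i ∈ Finset.range m, T i ω) t (by norm_num : (-1:ℝ) ≤ 0) hintm
      have hmgf : mgf (fun ω => ∑ i ∈ Finset.range m, T i ω) P (-1) = (μ / (1 + μ)) ^ m := by
        have := hlap m 1 zero_le_one
        rw [mgf]
        simpa [neg_mul, Real.one_rpow] using this
      have h1 : (P A).toReal ≤ (P {ω | ∑ i ∈ Finset.range m, T i ω ≤ t}).toReal :=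
        ENNReal.toReal_mono (measure_ne_top _ _) (measure_mono (Set.iInter_subset _ m))
      calc (P A).toReal ≤ (P {ω | ∑ i ∈ Finset.range m, T i ω ≤ t}).toReal := h1
        _ ≤ Real.exp (-(-1) * t) * mgf (fun ω => ∑ i ∈ Finset.range m, T i ω) P (-1) := hcher
        _ = Real.exp t * (μ / (1 + μ)) ^ m := by rw [hmgf]; norm_num
    have htend : Tendsto (fun m : ℕ => Real.exp t * (μ / (1 + μ)) ^ m) atTop (nhds 0) := by
      have hr : |μ / (1 + μ)| < 1 := by
        rw [abs_of_nonneg (div_nonneg hμ.le (by linarith))]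
        rw [div_lt_one (by linarith)]
        linarith
      simpa using (tendsto_pow_atTop_nhds_zero_of_abs_lt_one hr).const_mul (Real.exp t)
    have hle : (P A).toReal ≤ 0 := ge_of_tendsto htend (Filter.Eventually.of_forall hbd)
    have h0 : (P A).toReal = 0 := le_antisymm hle ENNReal.toReal_nonneg
    exact ((ENNReal.toReal_eq_zero_iff _).mp h0).resolve_right (measure_ne_top _ _)
  intro k s hs
  -- state probability as a difference of CDFs
  have hstate : ∀ t : ℝ, 0 < t → (P {ω | renewalCount T t ω = k}).toReal
      = (P {ω | ∑ i ∈ Finset.range k, T i ω ≤ t}).toReal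
        - (P {ω | ∑ i ∈ Finset.range (k + 1), T i ω ≤ t}).toReal := by
    intro t ht
    have hsub : {ω | ∑ i ∈ Finset.range (k + 1), T i ω ≤ t}
        ⊆ {ω | ∑ i ∈ Finset.range k, T i ω ≤ t} := fun ω h =>
      le_trans (hSmono ω (Nat.le_succ k)) h
    have hae : {ω | renewalCount T t ω = k}
        =ᵐ[P] ({ω | ∑ i ∈ Finset.range k, T i ω ≤ t}
          \ {ω | ∑ i ∈ Finset.range (k + 1), T i ω ≤ t} : Set Ω) := by
      rw [eventuallyEq_set]
      have h1 : ∀ᵐ ω ∂P, ω ∉ ⋂ m : ℕ, {ω | ∑ i ∈ Finset.range m, T i ω ≤ t} :=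
        compl_mem_ae_iff.mpr (hnull t)
      filter_upwards [h1] with ω hω
      simp only [Set.mem_iInter, Set.mem_setOf_eq, not_forall] at hω
      obtain ⟨m, hm⟩ := hω
      have hKdc : ∀ {a b : ℕ}, a ≤ b → (∑ i ∈ Finset.range b, T i ω ≤ t) →
          ∑ i ∈ Finset.range a, T i ω ≤ t := fun hab hb => le_trans (hSmono ω hab) hb
      have hK0 : (0:ℕ) ∈ {j : ℕ | ∑ i ∈ Finset.range j, T i ω ≤ t} := by
        simp [ht.le]
      have hKbdd : BddAbove {j : ℕ | ∑ i ∈ Finset.range j, T i ω ≤ t} := by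
        refine ⟨m, fun j hj => ?_⟩
        by_contra hjm
        push_neg at hjm
        exact hm (hKdc hjm.le hj)
      constructor
      · intro hk
        have hmem : renewalCount T t ω ∈ {j : ℕ | ∑ i ∈ Finset.range j, T i ω ≤ t} :=
          Nat.sSup_mem ⟨0, hK0⟩ hKbdd
        rw [hk] at hmem
        refine ⟨hmem, fun hk1 => ?_⟩
        have := le_csSup hKbdd hk1
        rw [show sSup {j : ℕ | ∑ i ∈ Finset.range j, T i ω ≤ t} = renewalCount T t ω from rfl,
          hk] at this
        omega
      · rintro ⟨hk, hk1⟩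
        refine le_antisymm (csSup_le ⟨0, hK0⟩ fun j hj => ?_) (le_csSup hKbdd hk)
        by_contra hjk
        push_neg at hjk
        exact hk1 (hKdc hjk hj)
    rw [measure_congr hae,
      measure_diff hsub ((hSmeas (k + 1)) measurableSet_Iic).nullMeasurableSet
        (measure_ne_top _ _),
      ENNReal.toReal_sub_of_le (measure_mono hsub) (measure_ne_top _ _)]
  -- integrability of the two Laplace integrands
  have hFmeas : ∀ m : ℕ,
      Measurable fun t => (P {ω | ∑ i ∈ Finset.range m, T i ω ≤ t}).toReal := fun m =>
    Monotone.measurable fun a b hab =>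
      ENNReal.toReal_mono (measure_ne_top _ _) (measure_mono fun ω h => le_trans h hab)
  have hint : ∀ m : ℕ, IntegrableOn
      (fun t => Real.exp (-(s * t)) * (P {ω | ∑ i ∈ Finset.range m, T i ω ≤ t}).toReal)
      (Set.Ioi (0:ℝ)) := by
    intro m
    have hg : IntegrableOn (fun t : ℝ => Real.exp (-(s * t))) (Set.Ioi (0:ℝ)) := by
      simpa [neg_mul] using exp_neg_integrableOn_Ioi 0 hs
    refine Integrable.mono' hg
      (((measurable_id.const_mul s).neg.exp.mul (hFmeas m)).aestronglyMeasurable)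
      (ae_of_all _ fun t => ?_)
    rw [Real.norm_eq_abs, abs_of_nonneg (mul_nonneg (Real.exp_pos _).le ENNReal.toReal_nonneg)]
    calc Real.exp (-(s * t)) * (P {ω | ∑ i ∈ Finset.range m, T i ω ≤ t}).toReal
        ≤ Real.exp (-(s * t)) * 1 := by
          gcongr
          exact ENNReal.toReal_le_of_le_ofReal zero_le_one (by simpa using prob_le_one)
      _ = Real.exp (-(s * t)) := mul_one _
  have hden : (0:ℝ) < s ^ ν + μ := by
    have := Real.rpow_pos_of_pos hs ν
    linarith
  calc ∫ t in Set.Ioi (0:ℝ),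
        Real.exp (-(s * t)) * (P {ω | renewalCount T t ω = k}).toReal
      = ∫ t in Set.Ioi (0:ℝ),
          (Real.exp (-(s * t)) * (P {ω | ∑ i ∈ Finset.range k, T i ω ≤ t}).toReal
            - Real.exp (-(s * t))
              * (P {ω | ∑ i ∈ Finset.range (k + 1), T i ω ≤ t}).toReal) := by
        refine setIntegral_congr_fun measurableSet_Ioi fun t ht => ?_
        rw [hstate t ht]
        ring
    _ = (∫ t in Set.Ioi (0:ℝ),
          Real.exp (-(s * t)) * (P {ω | ∑ i ∈ Finset.range k, T i ω ≤ t}).toReal)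
        - ∫ t in Set.Ioi (0:ℝ),
            Real.exp (-(s * t)) * (P {ω | ∑ i ∈ Finset.range (k+1), T i ω ≤ t}).toReal :=
        integral_sub (hint k) (hint (k + 1))
    _ = (∫ ω, Real.exp (-(s * ∑ i ∈ Finset.range k, T i ω)) ∂P) / s
        - (∫ ω, Real.exp (-(s * ∑ i ∈ Finset.range (k+1), T i ω)) ∂P) / s := by
        rw [laplace_cdf_aux P _ (hSmeas k) (hS0 k) hs,
          laplace_cdf_aux P _ (hSmeas (k+1)) (hS0 (k+1)) hs]
    _ = (μ / (s ^ ν + μ)) ^ k / s - (μ / (s ^ ν + μ)) ^ (k + 1) / s := by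
        rw [hlap k s hs.le, hlap (k + 1) s hs.le]
    _ = μ ^ k * s ^ (ν - 1) / (s ^ ν + μ) ^ (k + 1) := by
        have h1 : s ^ (ν - 1) = s ^ ν / s := by
          rw [Real.rpow_sub hs, Real.rpow_one]
        rw [h1, div_pow, div_pow]
        field_simp
        ring
end

section
/- Let ν ∈ (0,1], μ > 0 and t > 0, and set x := μ t^ν. Then the state probabilities of the fractional Poisson process sum to one: ∑_{k=0}^∞ x^k E^{k+1}_{ν, νk+1}(-x) = 1, where E^γ_{α,β}(z) = ∑_{j=0}^∞ Γ(γ + j) z^j / (Γ(γ) · j! · Γ(αj + β)). -/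
open Real

open Filter in
lemma gamma_conv {ν s : ℝ} (hν0 : 0 < ν) (hν1 : ν ≤ 1) (hs : 1 ≤ s) :
    s * Real.Gamma s ≤ Real.Gamma (s + ν) * (s + ν) ^ (1 - ν) := by
  have hs0 : (0:ℝ) < s := by linarith
  have hsν : (0:ℝ) < s + ν := by linarith
  have key := Real.convexOn_log_Gamma.2 (show s + ν ∈ Set.Ioi (0:ℝ) from hsν)
    (show s + ν + 1 ∈ Set.Ioi (0:ℝ) by simpa using by linarith)
    hν0.le (by linarith : (0:ℝ) ≤ 1 - ν) (by ring)
  simp only [smul_eq_mul, Function.comp] at key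
  rw [show ν * (s + ν) + (1 - ν) * (s + ν + 1) = s + 1 by ring] at key
  rw [Real.Gamma_add_one hs0.ne', Real.Gamma_add_one hsν.ne',
    Real.log_mul hsν.ne' (Real.Gamma_pos_of_pos hsν).ne'] at key
  have hpos : 0 < s * Real.Gamma s := mul_pos hs0 (Real.Gamma_pos_of_pos hs0)
  calc s * Real.Gamma s = Real.exp (Real.log (s * Real.Gamma s)) := (Real.exp_log hpos).symm
    _ ≤ Real.exp (Real.log (Real.Gamma (s+ν)) + (1-ν) * Real.log (s+ν)) := by
        apply Real.exp_le_exp.2; linarith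
    _ = Real.Gamma (s+ν) * (s+ν) ^ (1-ν) := by
        rw [Real.exp_add, Real.exp_log (Real.Gamma_pos_of_pos hsν),
          Real.rpow_def_of_pos hsν, mul_comm (Real.log (s+ν))]

open Filter in
lemma summable_ml {ν y : ℝ} (hν0 : 0 < ν) (hν1 : ν ≤ 1) (hy : 0 ≤ y) :
    Summable (fun n : ℕ => y ^ n / Real.Gamma (ν * n + 1)) := by
  apply summable_of_ratio_norm_eventually_le (r := 1/2) (by norm_num)
  have t1 : Tendsto (fun n : ℕ => ν * n + 1) atTop atTop :=
    tendsto_atTop_add_const_right _ 1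
      (Tendsto.const_mul_atTop hν0 tendsto_natCast_atTop_atTop)
  have ht : Tendsto (fun n : ℕ => 2 * y * (ν * n + 1) ^ (-ν)) atTop (nhds 0) := by
    have := ((tendsto_rpow_neg_atTop hν0).comp t1).const_mul (2 * y)
    simpa using this
  filter_upwards [ht.eventually (eventually_le_nhds (by norm_num : (0:ℝ) < 1/4))] with n hn
  set s : ℝ := ν * n + 1 with hsdef
  have hs1 : (1:ℝ) ≤ s := by
    have : (0:ℝ) ≤ ν * n := by positivity
    simp only [hsdef]; linarith
  have hs0 : (0:ℝ) < s := by linarith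
  have hsν : (0:ℝ) < s + ν := by linarith
  have hΓs : 0 < Real.Gamma s := Real.Gamma_pos_of_pos hs0
  have hΓsν : 0 < Real.Gamma (s + ν) := Real.Gamma_pos_of_pos hsν
  have hcast : ν * ((n:ℕ)+1 : ℕ) + 1 = s + ν := by push_cast [hsdef]; ring
  rw [hcast]
  have hnn1 : (0:ℝ) ≤ y ^ (n+1) / Real.Gamma (s+ν) := by positivity
  have hnn2 : (0:ℝ) ≤ y ^ n / Real.Gamma s := by positivity
  rw [Real.norm_eq_abs, Real.norm_eq_abs, abs_of_nonneg hnn1, abs_of_nonneg hnn2]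
  have hA := gamma_conv hν0 hν1 hs1
  have hB : (s + ν) ^ (1 - ν) ≤ 2 * s ^ (1 - ν) := by
    calc (s + ν) ^ (1 - ν) ≤ (2 * s) ^ (1 - ν) :=
          Real.rpow_le_rpow (by linarith) (by linarith) (by linarith)
      _ = 2 ^ (1 - ν) * s ^ (1 - ν) := Real.mul_rpow (by norm_num) (by linarith)
      _ ≤ 2 * s ^ (1 - ν) := by
          apply mul_le_mul_of_nonneg_right _ (Real.rpow_nonneg (by linarith) _)
          calc (2:ℝ) ^ (1 - ν) ≤ 2 ^ (1:ℝ) :=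
                Real.rpow_le_rpow_of_exponent_le one_le_two (by linarith)
            _ = 2 := Real.rpow_one 2
  have hsplit : s ^ (1 - ν) = s * s ^ (-ν) := by
    rw [show (1 - ν) = 1 + (-ν) by ring, Real.rpow_add hs0, Real.rpow_one]
  have hsinv : (0:ℝ) ≤ s ^ (-ν) := Real.rpow_nonneg hs0.le _
  -- Γ s ≤ 2 * Γ (s+ν) * s^(-ν)
  have hGle : Real.Gamma s ≤ 2 * Real.Gamma (s + ν) * s ^ (-ν) := by
    have h1 : s * Real.Gamma s ≤ Real.Gamma (s+ν) * (2 * (s * s ^ (-ν))) := by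
      calc s * Real.Gamma s ≤ Real.Gamma (s+ν) * (s+ν) ^ (1-ν) := hA
        _ ≤ Real.Gamma (s+ν) * (2 * s ^ (1-ν)) := by
            apply mul_le_mul_of_nonneg_left hB hΓsν.le
        _ = Real.Gamma (s+ν) * (2 * (s * s ^ (-ν))) := by rw [hsplit]
    nlinarith
  have hyn : (0:ℝ) ≤ y ^ n := pow_nonneg hy n
  rw [show (1/2 : ℝ) * (y ^ n / Real.Gamma s) = (y ^ n / 2) / Real.Gamma s by ring,
    div_le_div_iff₀ hΓsν hΓs]
  have e1 : y * y ^ n * Real.Gamma s ≤ y * y ^ n * (2 * Real.Gamma (s+ν) * s ^ (-ν)) :=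
    mul_le_mul_of_nonneg_left hGle (by positivity)
  have e2 : (2 * y * s ^ (-ν)) * (y ^ n * Real.Gamma (s+ν)) ≤ (1/4) * (y ^ n * Real.Gamma (s+ν)) :=
    mul_le_mul_of_nonneg_right hn (by positivity)
  calc y ^ (n+1) * Real.Gamma s = y * y ^ n * Real.Gamma s := by ring
    _ ≤ y * y ^ n * (2 * Real.Gamma (s+ν) * s ^ (-ν)) := e1
    _ = (2 * y * s ^ (-ν)) * (y ^ n * Real.Gamma (s+ν)) := by ring
    _ ≤ (1/4) * (y ^ n * Real.Gamma (s+ν)) := e2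
    _ ≤ y ^ n / 2 * Real.Gamma (s+ν) := by nlinarith

/-- The state probabilities of the fractional Poisson process sum to one:
for `ν ∈ (0,1]`, `μ > 0`, `t > 0` and `x = μ t^ν`,
`∑_{k} x^k E^{k+1}_{ν,νk+1}(-x) = 1`. -/
theorem fractional_poisson_state_prob_sum_one
    (ν : ℝ) (hν : ν ∈ Set.Ioc (0 : ℝ) 1) (μ : ℝ) (hμ : 0 < μ)
    (t : ℝ) (ht : 0 < t) (x : ℝ) (hx : x = μ * t ^ ν) :
    ∑' k : ℕ, x ^ k * mittagLeffler3 ν (ν * k + 1) (k + 1) (-x) = 1 := by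
  obtain ⟨hν0, hν1⟩ := hν
  have hx0 : 0 < x := by rw [hx]; exact mul_pos hμ (Real.rpow_pos_of_pos ht ν)
  set c : ℕ × ℕ → ℝ := fun p =>
    ((p.1 + p.2).choose p.2 : ℝ) * ((-1 : ℝ) ^ p.2 * x ^ (p.1 + p.2)) /
      Real.Gamma (ν * ((p.1 + p.2 : ℕ) : ℝ) + 1) with hcdef
  have hΓpos : ∀ m : ℕ, 0 < Real.Gamma (ν * (m : ℝ) + 1) := by
    intro m
    apply Real.Gamma_pos_of_pos
    have : (0:ℝ) ≤ ν * m := by positivity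
    linarith
  -- Step 1: termwise identity
  have step1 : ∀ k : ℕ, x ^ k * mittagLeffler3 ν (ν * k + 1) (k + 1) (-x)
      = ∑' j : ℕ, c (k, j) := by
    intro k
    rw [mittagLeffler3, ← tsum_mul_left]
    apply tsum_congr
    intro j
    have hG1 : Real.Gamma ((k : ℝ) + 1 + (j : ℝ)) = ((k + j).factorial : ℝ) := by
      rw [show ((k : ℝ) + 1 + (j : ℝ)) = ((k + j : ℕ) : ℝ) + 1 by push_cast; ring,
        Real.Gamma_nat_eq_factorial]
    have hG2 : Real.Gamma ((k : ℝ) + 1) = (k.factorial : ℝ) := Real.Gamma_nat_eq_factorial k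
    have hG3 : ν * (j : ℝ) + (ν * (k : ℝ) + 1) = ν * ((k + j : ℕ) : ℝ) + 1 := by
      push_cast; ring
    have hch : (((k + j).choose j : ℕ) : ℝ) * (j.factorial : ℝ) * (k.factorial : ℝ)
        = ((k + j).factorial : ℝ) := by
      have := Nat.choose_mul_factorial_mul_factorial (Nat.le_add_left j k)
      rw [Nat.add_sub_cancel] at this
      exact_mod_cast this
    have hne1 : (Real.Gamma (ν * ((k + j : ℕ) : ℝ) + 1)) ≠ 0 := (hΓpos (k + j)).ne'
    have hne2 : (k.factorial : ℝ) ≠ 0 := Nat.cast_ne_zero.mpr k.factorial_ne_zero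
    have hne3 : (j.factorial : ℝ) ≠ 0 := Nat.cast_ne_zero.mpr j.factorial_ne_zero
    simp only [hcdef]
    rw [hG1, hG2, hG3, neg_pow, pow_add, ← hch]
    field_simp
  -- antidiagonal sums
  have hrange : ∀ n : ℕ, ∑ p ∈ Finset.HasAntidiagonal.antidiagonal n, c p
      = ∑ k ∈ Finset.range (n + 1), c (n - k, k) := by
    intro n
    rw [← Finset.Nat.sum_antidiagonal_swap]
    exact Finset.Nat.sum_antidiagonal_eq_sum_range_succ (fun a b => c (b, a)) n
  have key : ∀ n : ℕ, ∑ p ∈ Finset.HasAntidiagonal.antidiagonal n, c p = if n = 0 then 1 else 0 := by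
    intro n
    rw [hrange]
    have h2 : ∀ k ∈ Finset.range (n + 1),
        c (n - k, k) = x ^ n / Real.Gamma (ν * n + 1) * ((-1 : ℝ) ^ k * (n.choose k : ℝ)) := by
      intro k hk
      have hkn : k ≤ n := Nat.lt_succ_iff.mp (Finset.mem_range.mp hk)
      simp only [hcdef]
      rw [show n - k + k = n from Nat.sub_add_cancel hkn]
      ring
    rw [Finset.sum_congr rfl h2, ← Finset.mul_sum]
    have h3 : ∑ k ∈ Finset.range (n + 1), ((-1 : ℝ) ^ k * (n.choose k : ℝ))
        = if n = 0 then 1 else 0 := by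
      have h := Int.alternating_sum_range_choose (n := n)
      have h' : ((∑ i ∈ Finset.range (n + 1), ((-1 : ℤ) ^ i * n.choose i) : ℤ) : ℝ)
          = ∑ k ∈ Finset.range (n + 1), ((-1 : ℝ) ^ k * (n.choose k : ℝ)) := by
        push_cast; rfl
      rw [← h', h]
      split_ifs <;> norm_num
    rw [h3]
    split_ifs with h
    · subst h; simp [Real.Gamma_one]
    · simp
  -- summability
  have habs_eq : ∀ p : ℕ × ℕ, |c p|
      = ((p.1 + p.2).choose p.2 : ℝ) * x ^ (p.1 + p.2) / Real.Gamma (ν * ((p.1 + p.2 : ℕ) : ℝ) + 1) := by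
    intro p
    simp only [hcdef]
    rw [abs_div, abs_mul, abs_mul, abs_pow, abs_neg, abs_one, one_pow, one_mul,
      abs_of_nonneg (by positivity : (0:ℝ) ≤ ((p.1 + p.2).choose p.2 : ℝ)),
      abs_of_nonneg (pow_nonneg hx0.le _), abs_of_nonneg (hΓpos (p.1 + p.2)).le]
  have habs : Summable fun p : ℕ × ℕ => |c p| := by
    apply (Finset.HasAntidiagonal.sigmaAntidiagonalEquivProd.summable_iff).mp
    refine (summable_sigma_of_nonneg fun _ => abs_nonneg _).mpr ⟨fun n => Summable.of_finite, ?_⟩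
    · have heq : ∀ n : ℕ, (∑' p : (Finset.HasAntidiagonal.antidiagonal n : Finset (ℕ × ℕ)),
          |c (Finset.HasAntidiagonal.sigmaAntidiagonalEquivProd ⟨n, p⟩)|) = (2 * x) ^ n / Real.Gamma (ν * n + 1) := by
        intro n
        have : ∀ p : (Finset.HasAntidiagonal.antidiagonal n : Finset (ℕ × ℕ)),
            (Finset.HasAntidiagonal.sigmaAntidiagonalEquivProd ⟨n, p⟩ : ℕ × ℕ) = (p : ℕ × ℕ) := fun p => rfl
        simp only [this]
        rw [Finset.tsum_subtype (Finset.HasAntidiagonal.antidiagonal n) (fun p => |c p|)]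
        have hr : ∑ p ∈ Finset.HasAntidiagonal.antidiagonal n, |c p|
            = ∑ k ∈ Finset.range (n + 1), |c (n - k, k)| := by
          rw [← Finset.Nat.sum_antidiagonal_swap]
          exact Finset.Nat.sum_antidiagonal_eq_sum_range_succ (fun a b => |c (b, a)|) n
        rw [hr]
        have h2 : ∀ k ∈ Finset.range (n + 1),
            |c (n - k, k)| = x ^ n / Real.Gamma (ν * n + 1) * (n.choose k : ℝ) := by
          intro k hk
          have hkn : k ≤ n := Nat.lt_succ_iff.mp (Finset.mem_range.mp hk)
          rw [habs_eq]
          simp only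
          rw [show n - k + k = n from Nat.sub_add_cancel hkn]
          ring
        rw [Finset.sum_congr rfl h2, ← Finset.mul_sum]
        have : ∑ k ∈ Finset.range (n + 1), (n.choose k : ℝ) = (2 : ℝ) ^ n := by
          exact_mod_cast congrArg (Nat.cast : ℕ → ℝ) (Nat.sum_range_choose n)
        rw [this, mul_pow]
        field_simp
      rw [funext heq]
      exact summable_ml hν0 hν1 (by linarith)
  have hc : Summable c := habs.of_abs
  -- main chain
  calc ∑' k : ℕ, x ^ k * mittagLeffler3 ν (ν * k + 1) (k + 1) (-x)
      = ∑' k : ℕ, ∑' j : ℕ, c (k, j) := tsum_congr step1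
    _ = ∑' p : ℕ × ℕ, c p := by
        have hslice := ((summable_prod_of_nonneg (fun _ => abs_nonneg _)).mp habs).1
        exact (Summable.tsum_prod' hc (fun k => (hslice k).of_abs)).symm
    _ = ∑' σ : (Σ n : ℕ, (Finset.HasAntidiagonal.antidiagonal n : Finset (ℕ × ℕ))),
          c (Finset.HasAntidiagonal.sigmaAntidiagonalEquivProd σ) :=
        (Finset.HasAntidiagonal.sigmaAntidiagonalEquivProd.tsum_eq c).symm
    _ = ∑' n : ℕ, ∑' p : (Finset.HasAntidiagonal.antidiagonal n : Finset (ℕ × ℕ)), c p :=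
        Summable.tsum_sigma' (fun n => Summable.of_finite)
          (Finset.HasAntidiagonal.sigmaAntidiagonalEquivProd.summable_iff.mpr hc)
    _ = ∑' n : ℕ, ∑ p ∈ Finset.HasAntidiagonal.antidiagonal n, c p :=
        tsum_congr fun n => Finset.tsum_subtype (Finset.HasAntidiagonal.antidiagonal n) c
    _ = ∑' n : ℕ, if n = 0 then (1:ℝ) else 0 := tsum_congr key
    _ = 1 := tsum_ite_eq 0 1
end
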